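/- For every finite sum u(t) = Σ_{k=0}^{N} u_k sin((π/2 + kπ)t/T) with real coefficients, the inner product ⟨u, H_T u⟩_{L²(0,T)} = ∫₀ᵀ u(t) · (Σ_{k=0}^{N} u_k cos((π/2 + kπ)t/T)) dt is nonnegative. -/

import Mathlib

open Real intervalIntegral Finset

private lemma cos_nat_pi (n : ℕ) : Real.cos ((n : ℝ) * π) = (-1) ^ n := by
  simpa using Real.cos_nat_mul_pi_sub 0 n

private lemma int_sin_val (T : ℝ) (hT : 0 < T) (n : ℕ) :
    (∫ t in (0:ℝ)..T, Real.sin (((n : ℝ) + 1) * π * t / T)) =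
      T / (((n : ℝ) + 1) * π) * (1 - (-1) ^ (n + 1)) := by
  have hn : ((n : ℝ) + 1) ≠ 0 := by positivity
  have hm : ((n : ℝ) + 1) * π / T ≠ 0 := by
    have := Real.pi_pos
    positivity
  have harg : ∀ t : ℝ, ((n : ℝ) + 1) * π * t / T = (((n : ℝ) + 1) * π / T) * t := by
    intro t; ring
  simp only [harg]
  rw [intervalIntegral.integral_comp_mul_left (fun x => Real.sin x) hm]
  have hT' : ((n : ℝ) + 1) * π / T * T = ((n : ℝ) + 1) * π := by
    field_simp
  rw [mul_zero, hT', integral_sin]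
  have : (((n : ℝ) + 1) * π) = (((n + 1 : ℕ) : ℝ) * π) := by push_cast; ring
  rw [this, cos_nat_pi]
  simp only [smul_eq_mul, Real.cos_zero]
  push_cast
  field_simp

private noncomputable def mhI (T : ℝ) (j k : ℕ) : ℝ :=
  ∫ t in (0:ℝ)..T, Real.sin ((π / 2 + j * π) * t / T) * Real.cos ((π / 2 + k * π) * t / T)

private noncomputable def mhV (T : ℝ) (n : ℕ) : ℝ :=
  T / (((n : ℝ) + 1) * π) * (1 - (-1) ^ (n + 1))

private lemma mhI_symm (T : ℝ) (hT : 0 < T) (j k : ℕ) :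
    mhI T j k + mhI T k j = mhV T (j + k) := by
  have h1 : Continuous fun t : ℝ =>
      Real.sin ((π / 2 + j * π) * t / T) * Real.cos ((π / 2 + k * π) * t / T) := by fun_prop
  have h2 : Continuous fun t : ℝ =>
      Real.sin ((π / 2 + k * π) * t / T) * Real.cos ((π / 2 + j * π) * t / T) := by fun_prop
  have hadd : mhI T j k + mhI T k j
      = ∫ t in (0:ℝ)..T, Real.sin (((j + k : ℕ) + 1 : ℝ) * π * t / T) := by
    rw [mhI, mhI, ← intervalIntegral.integral_add (h1.intervalIntegrable _ _)
      (h2.intervalIntegrable _ _)]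
    apply intervalIntegral.integral_congr
    intro t _
    have := Real.sin_add ((π / 2 + j * π) * t / T) ((π / 2 + k * π) * t / T)
    have harg : (π / 2 + j * π) * t / T + (π / 2 + k * π) * t / T
        = ((j + k : ℕ) + 1 : ℝ) * π * t / T := by push_cast; ring
    rw [harg] at this
    beta_reduce
    rw [this]; ring
  rw [hadd, int_sin_val T hT (j + k), mhV]

private lemma mhV_quad_nonneg (T : ℝ) (hT : 0 < T) (N : ℕ) (u : ℕ → ℝ) :
    0 ≤ ∑ j ∈ Finset.range (N + 1), ∑ k ∈ Finset.range (N + 1), u j * u k * mhV T (j + k) := by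
  have hπ := Real.pi_pos
  have hV : ∀ n : ℕ, mhV T n = (T / π) * ∫ x in (0:ℝ)..1, (x ^ n + (-x) ^ n) := by
    intro n
    rw [intervalIntegral.integral_add ((continuous_pow n).intervalIntegrable _ _)
      ((show Continuous fun x : ℝ => (-x) ^ n from (continuous_neg).pow n).intervalIntegrable _ _)]
    have h2 : (∫ x in (0:ℝ)..1, (-x) ^ n) = (-1) ^ n * ∫ x in (0:ℝ)..1, x ^ n := by
      rw [← intervalIntegral.integral_const_mul]
      apply intervalIntegral.integral_congr
      intro x _
      ring
    rw [h2, integral_pow]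
    simp only [one_pow, zero_pow (Nat.succ_ne_zero n)]
    have hn1 : ((n : ℝ) + 1) ≠ 0 := by positivity
    rw [mhV, pow_succ]
    field_simp
    ring
  have hpt : ∀ x : ℝ,
      (∑ j ∈ Finset.range (N + 1), u j * x ^ j) ^ 2 +
        (∑ j ∈ Finset.range (N + 1), u j * (-x) ^ j) ^ 2
      = ∑ j ∈ Finset.range (N + 1), ∑ k ∈ Finset.range (N + 1),
          (u j * u k * (x ^ (j + k) + (-x) ^ (j + k))) := by
    intro x
    rw [sq, sq, Finset.sum_mul_sum, Finset.sum_mul_sum, ← Finset.sum_add_distrib]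
    refine Finset.sum_congr rfl fun j _ => ?_
    rw [← Finset.sum_add_distrib]
    refine Finset.sum_congr rfl fun k _ => ?_
    rw [pow_add, pow_add]; ring
  have hrw : (∑ j ∈ Finset.range (N + 1), ∑ k ∈ Finset.range (N + 1), u j * u k * mhV T (j + k))
      = (T / π) * ∫ x in (0:ℝ)..1,
          ((∑ j ∈ Finset.range (N + 1), u j * x ^ j) ^ 2 +
           (∑ j ∈ Finset.range (N + 1), u j * (-x) ^ j) ^ 2) := by
    simp_rw [hpt]
    rw [intervalIntegral.integral_finset_sum (fun j _ => by
      apply Continuous.intervalIntegrable; fun_prop)]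
    rw [Finset.mul_sum]
    refine Finset.sum_congr rfl fun j _ => ?_
    rw [intervalIntegral.integral_finset_sum (fun k _ => by
      apply Continuous.intervalIntegrable; fun_prop)]
    rw [Finset.mul_sum]
    refine Finset.sum_congr rfl fun k _ => ?_
    rw [intervalIntegral.integral_const_mul, hV]
    ring
  rw [hrw]
  apply mul_nonneg (by positivity)
  apply intervalIntegral.integral_nonneg (by norm_num)
  intro x _
  positivity

/-- Positivity of the modified Hilbert transform: for every finite sine series `u`,
`⟨u, H_T u⟩_{L²(0,T)} ≥ 0`. -/
theorem modified_hilbert_nonneg (T : ℝ) (hT : 0 < T) (N : ℕ) (u : ℕ → ℝ) :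
    0 ≤ ∫ t in (0:ℝ)..T,
        (∑ k ∈ Finset.range (N + 1), u k * Real.sin ((π / 2 + k * π) * t / T)) *
        (∑ k ∈ Finset.range (N + 1), u k * Real.cos ((π / 2 + k * π) * t / T)) := by
  have hπ := Real.pi_pos
  have hsum : (∫ t in (0:ℝ)..T,
        (∑ k ∈ Finset.range (N + 1), u k * Real.sin ((π / 2 + k * π) * t / T)) *
        (∑ k ∈ Finset.range (N + 1), u k * Real.cos ((π / 2 + k * π) * t / T)))
      = ∑ j ∈ Finset.range (N + 1), ∑ k ∈ Finset.range (N + 1), u j * u k * mhI T j k := by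
    have h1 : ∀ t : ℝ,
        (∑ k ∈ Finset.range (N + 1), u k * Real.sin ((π / 2 + k * π) * t / T)) *
        (∑ k ∈ Finset.range (N + 1), u k * Real.cos ((π / 2 + k * π) * t / T))
        = ∑ j ∈ Finset.range (N + 1), ∑ k ∈ Finset.range (N + 1),
            u j * u k * (Real.sin ((π / 2 + j * π) * t / T) * Real.cos ((π / 2 + k * π) * t / T)) := by
      intro t
      rw [Finset.sum_mul_sum]
      exact Finset.sum_congr rfl fun j _ => Finset.sum_congr rfl fun k _ => by ring
    simp_rw [h1]
    rw [intervalIntegral.integral_finset_sum (fun j _ => by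
      apply Continuous.intervalIntegrable; fun_prop)]
    refine Finset.sum_congr rfl fun j _ => ?_
    rw [intervalIntegral.integral_finset_sum (fun k _ => by
      apply Continuous.intervalIntegrable; fun_prop)]
    refine Finset.sum_congr rfl fun k _ => ?_
    rw [intervalIntegral.integral_const_mul, mhI]
  have h2 : (∑ j ∈ Finset.range (N + 1), ∑ k ∈ Finset.range (N + 1), u j * u k * mhI T j k)
      = ∑ j ∈ Finset.range (N + 1), ∑ k ∈ Finset.range (N + 1), u k * u j * mhI T k j :=
    Finset.sum_comm
  have hdouble : (∑ j ∈ Finset.range (N + 1), ∑ k ∈ Finset.range (N + 1), u j * u k * mhI T j k)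
      + (∑ j ∈ Finset.range (N + 1), ∑ k ∈ Finset.range (N + 1), u j * u k * mhI T j k)
      = ∑ j ∈ Finset.range (N + 1), ∑ k ∈ Finset.range (N + 1), u j * u k * mhV T (j + k) := by
    nth_rewrite 2 [h2]
    rw [← Finset.sum_add_distrib]
    refine Finset.sum_congr rfl fun j _ => ?_
    rw [← Finset.sum_add_distrib]
    refine Finset.sum_congr rfl fun k _ => ?_
    rw [← mhI_symm T hT j k]
    ring
  have hQ := mhV_quad_nonneg T hT N u
  rw [hsum]
  linarith [hdouble]
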